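/- Let G be a group generated by a finite symmetric set S, let d, w ∈ ℕ, and let A be a d×d matrix over ℂ[G] whose entries all have support contained in B_w. Let (F_n) be a Følner exhaustion of G such that dim V(F_n)/|F_n| → c ∈ ℝ. Then: (i) for every δ > 0 there exist ε > 0 and N such that for all n ≥ N and every subset K ⊆ F_n with |K| ≥ (1−ε)|F_n|, the space R(K) := {f : Fin d → ℂ[G] | every coordinate of f is supported in Ω_w(K) and A.mulVec f = 0} satisfies dim R(K) ≥ (1−δ)·c·|F_n|; (ii) for every δ > 0 there exists N such that for all n ≥ N, the image of Z(F_n) under the linear map restricting each coordinate of f to F_n (i.e. multiplying each coordinate by the indicator of F_n) has ℂ-dimension at most (c + δ)|F_n|. -/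

import Mathlib

open Pointwise Filter Topology

section Defs

variable {G : Type*} [Group G]

/-- The word ball of radius `k` with respect to the generating set `S`. -/
noncomputable def wball (S : Finset G) (k : ℕ) : Finset G :=
  letI := Classical.decEq G
  (insert (1 : G) S) ^ k

/-- The `k`-neighborhood `B_k(F) = B_k * F` of a finite set `F`. -/
noncomputable def wnbhd (S : Finset G) (k : ℕ) (F : Finset G) : Finset G :=
  letI := Classical.decEq G
  wball S k * F

/-- The `k`-interior `Ω_k(F)` of a finite set `F`. -/
noncomputable def winter (S : Finset G) (k : ℕ) (F : Finset G) : Finset G :=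
  letI := Classical.decEq G
  F.filter fun p => wball S k * {p} ⊆ F

/-- The boundary `∂F` of a finite set `F`. -/
noncomputable def wbdry (S : Finset G) (F : Finset G) : Finset G :=
  letI := Classical.decEq G
  F.filter fun p => ∃ s ∈ S, s * p ∉ F

/-- `S` is a finite symmetric generating set. -/
def IsSymmGen (S : Finset G) : Prop :=
  (∀ s ∈ S, s⁻¹ ∈ S) ∧ Subgroup.closure (S : Set G) = ⊤

/-- A Følner exhaustion of `G`. -/
def IsFolnerExhaustion (S : Finset G) (F : ℕ → Finset G) : Prop :=
  (1 : G) ∈ F 0 ∧ Monotone F ∧ (∀ g : G, ∃ n, g ∈ F n) ∧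
    Filter.Tendsto (fun n => ((wbdry S (F n)).card : ℝ) / ((F n).card : ℝ))
      Filter.atTop (nhds 0)

variable {d : ℕ}

/-- The space of vectors supported in `Fs` such that `A.mulVec f` vanishes on `Fv`. -/
noncomputable def kerOn (A : Matrix (Fin d) (Fin d) (MonoidAlgebra ℂ G))
    (Fs Fv : Finset G) : Submodule ℂ (Fin d → MonoidAlgebra ℂ G) where
  carrier := {f | (∀ i, (f i).coeff.support ⊆ Fs) ∧ ∀ i, ∀ g ∈ Fv, (A.mulVec f i).coeff g = 0}
  zero_mem' := ⟨fun i => by simp, fun i g hg => by simp [Matrix.mulVec_zero]⟩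
  add_mem' := by
    classical
    rintro f g ⟨hf1, hf2⟩ ⟨hg1, hg2⟩
    constructor
    · intro i
      exact Finsupp.support_add.trans (Finset.union_subset (hf1 i) (hg1 i))
    · intro i x hx
      have h : A.mulVec (f + g) = A.mulVec f + A.mulVec g := Matrix.mulVec_add A f g
      rw [h]
      show (A.mulVec f i + A.mulVec g i).coeff x = 0
      rw [MonoidAlgebra.coeff_add, Finsupp.add_apply, hf2 i x hx, hg2 i x hx, add_zero]
  smul_mem' := by
    classical
    rintro c f ⟨hf1, hf2⟩
    constructor
    · intro i
      exact (Finsupp.support_smul).trans (hf1 i)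
    · intro i x hx
      have h : A.mulVec (c • f) = c • A.mulVec f := Matrix.mulVec_smul A c f
      rw [h]
      show (c • A.mulVec f i).coeff x = 0
      rw [MonoidAlgebra.coeff_smul, Finsupp.smul_apply, hf2 i x hx, smul_zero]

/-- The space of vectors supported in `Fs` with `A.mulVec f = 0`. -/
noncomputable def kerAll (A : Matrix (Fin d) (Fin d) (MonoidAlgebra ℂ G))
    (Fs : Finset G) : Submodule ℂ (Fin d → MonoidAlgebra ℂ G) where
  carrier := {f | (∀ i, (f i).coeff.support ⊆ Fs) ∧ A.mulVec f = 0}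
  zero_mem' := ⟨fun i => by simp, Matrix.mulVec_zero A⟩
  add_mem' := by
    classical
    rintro f g ⟨hf1, hf2⟩ ⟨hg1, hg2⟩
    exact ⟨fun i => Finsupp.support_add.trans (Finset.union_subset (hf1 i) (hg1 i)),
      by rw [Matrix.mulVec_add, hf2, hg2, add_zero]⟩
  smul_mem' := by
    classical
    rintro c f ⟨hf1, hf2⟩
    exact ⟨fun i => (Finsupp.support_smul).trans (hf1 i),
      by rw [Matrix.mulVec_smul, hf2, smul_zero]⟩

/-- `V(F)`. -/
noncomputable def VSpace (A : Matrix (Fin d) (Fin d) (MonoidAlgebra ℂ G)) (F : Finset G) :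
    Submodule ℂ (Fin d → MonoidAlgebra ℂ G) :=
  kerOn A F F

/-- `Z(F)`. -/
noncomputable def ZSpace (S : Finset G) (w : ℕ) (A : Matrix (Fin d) (Fin d) (MonoidAlgebra ℂ G))
    (F : Finset G) : Submodule ℂ (Fin d → MonoidAlgebra ℂ G) :=
  kerOn A (wnbhd S w F) F

/-- `W(F)`. -/
noncomputable def WSpace (S : Finset G) (w : ℕ) (A : Matrix (Fin d) (Fin d) (MonoidAlgebra ℂ G))
    (F : Finset G) : Submodule ℂ (Fin d → MonoidAlgebra ℂ G) :=
  kerAll A (winter S w F)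

/-- `A.mulVec` as a `ℂ`-linear map. -/
noncomputable def mulVecL {R : Type*} [Ring R] [Algebra ℂ R] {d : ℕ}
    (A : Matrix (Fin d) (Fin d) R) : (Fin d → R) →ₗ[ℂ] (Fin d → R) where
  toFun := A.mulVec
  map_add' := Matrix.mulVec_add A
  map_smul' c v := Matrix.mulVec_smul A c v

/-- Coordinatewise restriction to `F` (multiplication by the indicator of `F`). -/
noncomputable def restrictTo (d : ℕ) (F : Finset G) :
    (Fin d → MonoidAlgebra ℂ G) →ₗ[ℂ] (Fin d → MonoidAlgebra ℂ G) :=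
  letI := Classical.decEq G
  { toFun := fun f i => MonoidAlgebra.ofCoeff ((f i).coeff.filter (· ∈ F))
    map_add' := fun f g => by
      funext i
      exact congrArg MonoidAlgebra.ofCoeff Finsupp.filter_add
    map_smul' := fun c f => by
      funext i
      exact congrArg MonoidAlgebra.ofCoeff Finsupp.filter_smul }

end Defs

section Tiling

variable {ι α : Type*}

/-- An `ε`-disjoint family of finite sets. -/
def EpsDisjoint (I : Finset ι) (A : ι → Finset α) (ε : ℝ) : Prop :=
  ∃ Ab : ι → Finset α, (∀ i ∈ I, Ab i ⊆ A i) ∧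
    (∀ i ∈ I, ((1 - ε) * (A i).card : ℝ) ≤ ((Ab i).card : ℝ)) ∧
    ∀ i ∈ I, ∀ j ∈ I, i ≠ j → Disjoint (Ab i) (Ab j)

/-- The family `(A i)_{i ∈ I}` `a`-covers `X`. -/
def CoversFrac (I : Finset ι) (A : ι → Finset α) (X : Finset α) (a : ℝ) : Prop :=
  letI := Classical.decEq α
  (a * X.card : ℝ) ≤ ((X ∩ I.biUnion A).card : ℝ)

/-- The family `(A i)_{i ∈ I}` `δ`-evenly covers `X`. -/
def EvenCovering (I : Finset ι) (A : ι → Finset α) (X : Finset α) (δ : ℝ) : Prop :=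
  letI := Classical.decEq α
  ∃ M : ℕ, 1 ≤ M ∧ (∀ p ∈ X, (I.filter fun i => p ∈ A i).card ≤ M) ∧
    ((1 - δ) * M * X.card : ℝ) ≤ ∑ i ∈ I, ((A i).card : ℝ)

/-- The right translate `H·x`. -/
noncomputable def rtrans [Mul α] (H : Finset α) (x : α) : Finset α :=
  letI := Classical.decEq α
  H.image (· * x)

end Tiling

section Supp

variable {G : Type*} [Group G]

/-- Vectors all of whose coordinates are supported in `F`. -/
noncomputable def suppIn (d : ℕ) (F : Finset G) :
    Submodule ℂ (Fin d → MonoidAlgebra ℂ G) where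
  carrier := {f | ∀ i, (f i).coeff.support ⊆ F}
  zero_mem' := fun i => by simp
  add_mem' := by
    classical
    intro f g hf hg i
    exact Finsupp.support_add.trans (Finset.union_subset (hf i) (hg i))
  smul_mem' := fun c f hf i => (Finsupp.support_smul).trans (hf i)

end Supp
section Aux1
variable {G : Type*} [Group G] {S : Finset G}

lemma myone_mem_wball (S : Finset G) (k : ℕ) : (1 : G) ∈ wball S k := by
  classical
  induction k with
  | zero => simp [wball]
  | succ n ih =>
      unfold wball at *
      rw [pow_succ]
      simpa using Finset.mul_mem_mul ih (Finset.mem_insert_self 1 S)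

lemma mymul_mem_wball {b c : G} {j k : ℕ} (hb : b ∈ wball S j) (hc : c ∈ wball S k) :
    b * c ∈ wball S (j + k) := by
  classical
  unfold wball at *
  rw [pow_add]
  exact Finset.mul_mem_mul hb hc

lemma mywball_subset {j k : ℕ} (h : j ≤ k) {b : G} (hb : b ∈ wball S j) : b ∈ wball S k := by
  have := mymul_mem_wball hb (myone_mem_wball S (k - j))
  rwa [mul_one, Nat.add_sub_cancel' h] at this

lemma mem_wball_one {b : G} : b ∈ wball S 1 ↔ b = 1 ∨ b ∈ S := by
  classical
  unfold wball
  rw [pow_one]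
  exact Finset.mem_insert

lemma myinv_mem_wball (hS : ∀ s ∈ S, s⁻¹ ∈ S) {k : ℕ} {b : G} (hb : b ∈ wball S k) :
    b⁻¹ ∈ wball S k := by
  classical
  induction k generalizing b with
  | zero =>
      unfold wball at *
      simp_all
  | succ n ih =>
      unfold wball at hb
      rw [pow_succ] at hb
      obtain ⟨x, hx, s, hs, rfl⟩ := Finset.mem_mul.mp hb
      have hs' : s⁻¹ ∈ wball S 1 := by
        rcases Finset.mem_insert.mp hs with h | h
        · subst h; exact mem_wball_one.mpr (Or.inl (by simp))
        · exact mem_wball_one.mpr (Or.inr (hS s h))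
      have hx' : x⁻¹ ∈ wball S n := ih hx
      have := mymul_mem_wball hs' hx'
      rw [mul_inv_rev]
      exact mywball_subset (by omega) this

lemma mem_winter {k : ℕ} {F : Finset G} {p : G} :
    p ∈ winter S k F ↔ p ∈ F ∧ ∀ b ∈ wball S k, b * p ∈ F := by
  classical
  unfold winter
  rw [Finset.mem_filter]
  constructor
  · rintro ⟨h1, h2⟩
    exact ⟨h1, fun b hb => h2 (Finset.mul_mem_mul hb (Finset.mem_singleton_self p))⟩
  · rintro ⟨h1, h2⟩
    refine ⟨h1, fun x hx => ?_⟩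
    obtain ⟨b, hb, q, hq, rfl⟩ := Finset.mem_mul.mp hx
    rw [Finset.mem_singleton] at hq
    subst hq
    exact h2 b hb

lemma mem_wbdry {F : Finset G} {p : G} :
    p ∈ wbdry S F ↔ p ∈ F ∧ ∃ s ∈ S, s * p ∉ F := by
  classical
  unfold wbdry
  exact Finset.mem_filter

lemma winter_subset {k : ℕ} {F : Finset G} : winter S k F ⊆ F :=
  fun _ hp => (mem_winter.mp hp).1

lemma mul_mem_winter {j k : ℕ} {F : Finset G} {b p : G} (hb : b ∈ wball S j)
    (hp : p ∈ winter S (j + k) F) : b * p ∈ winter S k F := by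
  rw [mem_winter] at hp ⊢
  refine ⟨hp.2 b (mywball_subset (by omega) hb), fun c hc => ?_⟩
  rw [← mul_assoc]
  exact hp.2 (c * b) (by rw [Nat.add_comm]; exact mymul_mem_wball hc hb)

lemma winter_anti {j k : ℕ} (h : j ≤ k) {F : Finset G} : winter S k F ⊆ winter S j F := by
  intro p hp
  rw [mem_winter] at hp ⊢
  exact ⟨hp.1, fun b hb => hp.2 b (mywball_subset h hb)⟩

/-- escape lemma -/
lemma escape (hS : ∀ s ∈ S, s⁻¹ ∈ S) {F : Finset G} :
    ∀ k : ℕ, ∀ b ∈ wball S k, ∀ p ∈ F, b * p ∉ F →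
      ∃ c ∈ wball S k, ∃ q ∈ wbdry S F, c * q = p := by
  classical
  intro k
  induction k with
  | zero =>
      intro b hb p hp hbp
      unfold wball at hb
      simp only [pow_zero, Finset.mem_one] at hb
      subst hb
      simp [hp] at hbp
  | succ n ih =>
      intro b hb p hp hbp
      unfold wball at hb
      rw [pow_succ] at hb
      obtain ⟨x, hx, s, hs, rfl⟩ := Finset.mem_mul.mp hb
      by_cases hsp : s * p ∈ F
      · obtain ⟨c, hc, q, hq, hcq⟩ := ih x hx (s * p) hsp (by rwa [← mul_assoc])
        refine ⟨s⁻¹ * c, ?_, q, hq, by rw [mul_assoc, hcq]; group⟩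
        have hs' : s⁻¹ ∈ wball S 1 := by
          rcases Finset.mem_insert.mp hs with h | h
          · subst h; exact mem_wball_one.mpr (Or.inl (by simp))
          · exact mem_wball_one.mpr (Or.inr (hS s h))
        have := mymul_mem_wball hs' hc
        exact mywball_subset (by omega) this
      · have hsS : s ∈ S := by
          rcases Finset.mem_insert.mp hs with h | h
          · subst h; simp [hp] at hsp
          · exact h
        exact ⟨1, myone_mem_wball S _, p, mem_wbdry.mpr ⟨hp, s, hsS, hsp⟩, one_mul p⟩

lemma card_sdiff_winter_general [DecidableEq G] (hS : ∀ s ∈ S, s⁻¹ ∈ S)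
    {F K : Finset G} (hK : K ⊆ F) (k : ℕ) :
    ((F \ winter S k K).card : ℝ) ≤ (F \ K).card +
      (wball S k).card * ((wbdry S F).card + (F \ K).card) := by
  have hsub : F \ winter S k K ⊆ (F \ K) ∪ ((wball S k * wbdry S F) ∪ (wball S k * (F \ K))) := by
    intro p hp
    rw [Finset.mem_sdiff] at hp
    obtain ⟨hpF, hpn⟩ := hp
    by_cases hpK : p ∈ K
    · have : ∃ b ∈ wball S k, b * p ∉ K := by
        by_contra h
        push_neg at h
        exact hpn (mem_winter.mpr ⟨hpK, h⟩)
      obtain ⟨b, hb, hbp⟩ := this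
      refine Finset.mem_union_right _ ?_
      by_cases hbF : b * p ∈ F
      · refine Finset.mem_union_right _ ?_
        have hb' : b⁻¹ ∈ wball S k := myinv_mem_wball hS hb
        have hm : b * p ∈ F \ K := Finset.mem_sdiff.mpr ⟨hbF, hbp⟩
        have h : b⁻¹ * (b * p) ∈ wball S k * (F \ K) := Finset.mul_mem_mul hb' hm
        rwa [inv_mul_cancel_left] at h
      · obtain ⟨c, hc, q, hq, hcq⟩ := escape hS k b hb p hpF hbF
        exact Finset.mem_union_left _ (hcq ▸ Finset.mul_mem_mul hc hq)
    · exact Finset.mem_union_left _ (Finset.mem_sdiff.mpr ⟨hpF, hpK⟩)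
  have hcard := Finset.card_le_card hsub
  have h1 := Finset.card_union_le (F \ K) ((wball S k * wbdry S F) ∪ (wball S k * (F \ K)))
  have h2 := Finset.card_union_le (wball S k * wbdry S F) (wball S k * (F \ K))
  have h3 := Finset.card_mul_le (s := wball S k) (t := wbdry S F)
  have h4 := Finset.card_mul_le (s := wball S k) (t := F \ K)
  have : (F \ winter S k K).card ≤ (F \ K).card +
      ((wball S k).card * (wbdry S F).card + (wball S k).card * (F \ K).card) := by omega
  calc ((F \ winter S k K).card : ℝ)
      ≤ (((F \ K).card + ((wball S k).card * (wbdry S F).card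
          + (wball S k).card * (F \ K).card) : ℕ) : ℝ) := by exact_mod_cast this
    _ = _ := by push_cast; ring

end Aux1


section Aux2
open Module
variable {G : Type*} [Group G] {S : Finset G} {d : ℕ}

lemma mem_kerOn {A : Matrix (Fin d) (Fin d) (MonoidAlgebra ℂ G)} {Fs Fv : Finset G}
    {f : Fin d → MonoidAlgebra ℂ G} :
    f ∈ kerOn A Fs Fv ↔ (∀ i, (f i).coeff.support ⊆ Fs) ∧ ∀ i, ∀ g ∈ Fv, (A.mulVec f i).coeff g = 0 :=
  Iff.rfl

lemma mem_kerAll {A : Matrix (Fin d) (Fin d) (MonoidAlgebra ℂ G)} {Fs : Finset G}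
    {f : Fin d → MonoidAlgebra ℂ G} :
    f ∈ kerAll A Fs ↔ (∀ i, (f i).coeff.support ⊆ Fs) ∧ A.mulVec f = 0 :=
  Iff.rfl

/-- Coordinatewise evaluation on a finite set, as a linear map. -/
noncomputable def evalOn (d : ℕ) (X : Finset G) :
    (Fin d → MonoidAlgebra ℂ G) →ₗ[ℂ] (Fin d → {x // x ∈ X} → ℂ) where
  toFun f i x := (f i).coeff x.1
  map_add' f g := by funext i x; exact Finsupp.add_apply _ _ _
  map_smul' c f := by funext i x; exact Finsupp.smul_apply _ _ _

lemma fd_of_supp (V : Submodule ℂ (Fin d → MonoidAlgebra ℂ G)) (X : Finset G)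
    (h : ∀ f ∈ V, ∀ i, (f i).coeff.support ⊆ X) : FiniteDimensional ℂ V := by
  classical
  have hker : LinearMap.ker ((evalOn d X).comp V.subtype) = ⊥ := by
    rw [LinearMap.ker_eq_bot']
    intro m hm
    apply Subtype.ext
    funext i
    ext a
    by_cases ha : a ∈ X
    · exact congrFun (congrFun hm i) ⟨a, ha⟩
    · show _ = ((0 : Fin d → MonoidAlgebra ℂ G) i).coeff a
      simp only [Pi.zero_apply, MonoidAlgebra.coeff_zero, Finsupp.coe_zero, Pi.zero_apply]
      by_contra hne
      exact ha (h m.1 m.2 i (Finsupp.mem_support_iff.mpr hne))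
  exact FiniteDimensional.of_injective _ (LinearMap.ker_eq_bot.mp hker)

/-- The key dimension inequality. -/
lemma key_dim_ineq (V W : Submodule ℂ (Fin d → MonoidAlgebra ℂ G))
    [FiniteDimensional ℂ V] [FiniteDimensional ℂ W] (D : Finset G)
    (φ : (Fin d → MonoidAlgebra ℂ G) →ₗ[ℂ] (Fin d → {x // x ∈ D} → ℂ))
    (h : ∀ f ∈ V, φ f = 0 → f ∈ W) :
    Module.finrank ℂ V ≤ Module.finrank ℂ W + d * D.card := by
  classical
  set ψ := φ.comp V.subtype with hψ
  have h1 : Module.finrank ℂ ↥(LinearMap.range ψ) + Module.finrank ℂ ↥(LinearMap.ker ψ)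
      = Module.finrank ℂ V := LinearMap.finrank_range_add_finrank_ker ψ
  have ht : Module.finrank ℂ (Fin d → {x // x ∈ D} → ℂ) = d * D.card := by
    rw [Module.finrank_pi_fintype]
    simp [Module.finrank_fintype_fun_eq_card]
  have h2 : Module.finrank ℂ ↥(LinearMap.range ψ) ≤ d * D.card := by
    have := Submodule.finrank_le (LinearMap.range ψ)
    omega
  have h3 : Module.finrank ℂ ↥(LinearMap.ker ψ) ≤ Module.finrank ℂ W := by
    let ρ : ↥(LinearMap.ker ψ) →ₗ[ℂ] W :=
      { toFun := fun x => ⟨x.1.1, h x.1.1 x.1.2 x.2⟩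
        map_add' := fun x y => rfl
        map_smul' := fun c x => rfl }
    have hinj : Function.Injective ρ := by
      intro x y hxy
      apply Subtype.ext
      apply Subtype.ext
      have h' : ((ρ x : W) : Fin d → MonoidAlgebra ℂ G) = ((ρ y : W) : Fin d → MonoidAlgebra ℂ G) :=
        congrArg Subtype.val hxy
      exact h'
    exact LinearMap.finrank_le_finrank_of_injective hinj
  omega

/-- Vanishing of a matrix-vector product outside a thickened support. -/
lemma mulVec_apply_eq_zero {w : ℕ} {A : Matrix (Fin d) (Fin d) (MonoidAlgebra ℂ G)}
    (hA : ∀ i j, (A i j).coeff.support ⊆ wball S w) {f : Fin d → MonoidAlgebra ℂ G}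
    {X : Finset G} (hf : ∀ j, (f j).coeff.support ⊆ X) {p : G}
    (hp : ∀ b ∈ wball S w, ∀ x ∈ X, b * x ≠ p) (i : Fin d) :
    (A.mulVec f i).coeff p = 0 := by
  classical
  have hdef : A.mulVec f i = ∑ j, A i j * f j := rfl
  rw [hdef, MonoidAlgebra.coeff_sum, Finsupp.finset_sum_apply]
  apply Finset.sum_eq_zero
  intro j _
  by_contra hne
  have hmem : p ∈ (A i j * f j).coeff.support := Finsupp.mem_support_iff.mpr hne
  have := MonoidAlgebra.support_coeff_mul_subset (A i j) (f j) hmem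
  obtain ⟨b, hb, x, hx, hbx⟩ := Finset.mem_mul.mp this
  exact hp b (hA i j hb) x (hf j hx) hbx

lemma frac_aux {dd bw δ aF : ℝ} (hbw : 0 ≤ bw) (hd : 0 ≤ dd) (hδ : 0 < δ) (haF : 0 < aF) :
    (dd * bw) * ((δ / (2 * (dd * bw + 1))) * aF) ≤ (δ / 2) * aF := by
  have ht : 0 ≤ dd * bw := mul_nonneg hd hbw
  have hne : (2 * (dd * bw + 1)) ≠ 0 := by positivity
  have h1 : δ / (2 * (dd * bw + 1)) * ((dd * bw) * aF)
      ≤ δ / (2 * (dd * bw + 1)) * ((dd * bw + 1) * aF) := by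
    apply mul_le_mul_of_nonneg_left (by nlinarith) (by positivity)
  have h2 : δ / (2 * (dd * bw + 1)) * ((dd * bw + 1) * aF) = (δ / 2) * aF := by
    field_simp
  nlinarith [h1, h2]

end Aux2


theorem properties_A_minus_plus {G : Type*} [Group G] (S : Finset G) (hS : IsSymmGen S)
    (F : ℕ → Finset G) (hF : IsFolnerExhaustion S F)
    (d w : ℕ) (A : Matrix (Fin d) (Fin d) (MonoidAlgebra ℂ G))
    (hA : ∀ i j, (A i j).coeff.support ⊆ wball S w) (c : ℝ)
    (hc : Tendsto (fun n => (Module.finrank ℂ (VSpace A (F n)) : ℝ) / ((F n).card : ℝ))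
      atTop (𝓝 c)) :
    (∀ δ : ℝ, 0 < δ → ∃ ε : ℝ, 0 < ε ∧ ∃ N : ℕ, ∀ n ≥ N, ∀ K ⊆ F n,
        ((1 - ε) * ((F n).card : ℝ) ≤ (K.card : ℝ)) →
        (1 - δ) * c * ((F n).card : ℝ) ≤ (Module.finrank ℂ (kerAll A (winter S w K)) : ℝ)) ∧
    (∀ δ : ℝ, 0 < δ → ∃ N : ℕ, ∀ n ≥ N,
        (Module.finrank ℂ ((ZSpace S w A (F n)).map (restrictTo d (F n))) : ℝ)
          ≤ (c + δ) * ((F n).card : ℝ)) := by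
  classical
  obtain ⟨hS1, -⟩ := hS
  obtain ⟨h1F, hmono, -, hlim⟩ := hF
  have hone : ∀ n, (1 : G) ∈ F n := fun n => hmono (Nat.zero_le n) h1F
  have hcardpos : ∀ n, 0 < ((F n).card : ℝ) := fun n => by
    exact_mod_cast Finset.card_pos.mpr ⟨(1 : G), hone n⟩
  have hc0 : 0 ≤ c :=
    ge_of_tendsto' hc fun n => div_nonneg (Nat.cast_nonneg _) (hcardpos n).le
  constructor
  · -- Part (i)
    intro δ hδ
    by_cases htriv : (1 - δ) * c ≤ 0
    · refine ⟨1, one_pos, 0, fun n _ K _ _ => ?_⟩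
      have h1 : (1 - δ) * c * ((F n).card : ℝ) ≤ 0 := by
        nlinarith [hcardpos n]
      exact h1.trans (Nat.cast_nonneg _)
    · push_neg at htriv
      have hcpos : 0 < c := by
        rcases lt_or_eq_of_le hc0 with h | h
        · exact h
        · exfalso; rw [← h] at htriv; simp at htriv
      set b2 : ℝ := ((wball S (w + w)).card : ℝ) with hb2def
      have hb2 : 0 ≤ b2 := Nat.cast_nonneg _
      set Cd : ℝ := (d : ℝ) * (1 + 2 * b2) + 1 with hCddef
      have hCd : 0 < Cd := by positivity
      set ε : ℝ := δ * c / (4 * Cd) with hεdef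
      have hε : 0 < ε := by positivity
      obtain ⟨N1, hN1⟩ := (Metric.tendsto_atTop.mp hc) (δ * c / 4) (by positivity)
      obtain ⟨N2, hN2⟩ := (Metric.tendsto_atTop.mp hlim) ε hε
      refine ⟨ε, hε, max N1 N2, fun n hn K hKF hKc => ?_⟩
      have hn1 := hN1 n (le_trans (le_max_left _ _) hn)
      have hn2 := hN2 n (le_trans (le_max_right _ _) hn)
      rw [Real.dist_eq] at hn1 hn2
      set aF : ℝ := ((F n).card : ℝ) with haFdef
      have haF : 0 < aF := hcardpos n
      have hVlow : (c - δ * c / 4) * aF ≤ (Module.finrank ℂ (VSpace A (F n)) : ℝ) := by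
        have h' : c - δ * c / 4 < (Module.finrank ℂ (VSpace A (F n)) : ℝ) / aF := by
          have h'' := (abs_lt.mp hn1).1
          linarith
        have := (lt_div_iff₀ haF).mp h'
        linarith
      have hbdry : ((wbdry S (F n)).card : ℝ) ≤ ε * aF := by
        have h' : ((wbdry S (F n)).card : ℝ) / aF < ε := by
          have := (abs_lt.mp (by simpa using hn2)).2
          simpa using this
        have := (div_lt_iff₀ haF).mp h'
        linarith
      have hFK : ((F n \ K).card : ℝ) ≤ ε * aF := by
        have hcle : K.card ≤ (F n).card := Finset.card_le_card hKF
        have hsd : ((F n \ K).card : ℝ) = aF - (K.card : ℝ) := by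
          rw [Finset.card_sdiff_of_subset hKF, Nat.cast_sub hcle]
        rw [hsd]
        linarith [hKc]
      haveI fdV := fd_of_supp (VSpace A (F n)) (F n) (fun f hf => hf.1)
      haveI fdW := fd_of_supp (kerAll A (winter S w K)) (winter S w K) (fun f hf => hf.1)
      set D : Finset G := F n \ winter S (w + w) K with hDdef
      have hmain : ∀ f ∈ VSpace A (F n), evalOn d D f = 0 → f ∈ kerAll A (winter S w K) := by
        intro f hf hφ
        obtain ⟨hf1, hf2⟩ := (mem_kerOn).mp hf
        have hsupp2 : ∀ i, (f i).coeff.support ⊆ winter S (w + w) K := by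
          intro i x hx
          by_contra hxn
          have hxD : x ∈ D := Finset.mem_sdiff.mpr ⟨hf1 i hx, hxn⟩
          have h0 : (f i).coeff x = 0 := congrFun (congrFun hφ i) ⟨x, hxD⟩
          exact Finsupp.mem_support_iff.mp hx h0
        refine mem_kerAll.mpr ⟨fun i => (hsupp2 i).trans (winter_anti (by omega)), ?_⟩
        funext i
        show A.mulVec f i = 0
        ext g
        show (A.mulVec f i).coeff g = 0
        by_cases hg : g ∈ F n
        · exact hf2 i g hg
        · refine mulVec_apply_eq_zero hA hsupp2 ?_ i
          intro b hb x hx hbx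
          exact hg (hKF (winter_subset (hbx ▸ mul_mem_winter hb hx)))
      have hkey := key_dim_ineq (VSpace A (F n)) (kerAll A (winter S w K)) D (evalOn d D) hmain
      have h8 := card_sdiff_winter_general (S := S) hS1 hKF (w + w)
      rw [← hDdef] at h8
      have hD : (D.card : ℝ) ≤ ε * (1 + 2 * b2) * aF := by
        have h9 : b2 * (((wbdry S (F n)).card : ℝ) + ((F n \ K).card : ℝ))
            ≤ b2 * (ε * aF + ε * aF) :=
          mul_le_mul_of_nonneg_left (by linarith) hb2
        linarith
      have hcast : (Module.finrank ℂ (VSpace A (F n)) : ℝ)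
          ≤ (Module.finrank ℂ (kerAll A (winter S w K)) : ℝ) + (d : ℝ) * (D.card : ℝ) := by
        exact_mod_cast hkey
      have hCdne : Cd ≠ 0 := ne_of_gt hCd
      have hεCd : Cd * ε = δ * c / 4 := by
        rw [hεdef]
        field_simp
      have hstep : (d : ℝ) * (D.card : ℝ) ≤ (δ * c / 4) * aF := by
        have hd0 : (0:ℝ) ≤ (d : ℝ) := Nat.cast_nonneg _
        have h1 : (d : ℝ) * (D.card : ℝ) ≤ (d : ℝ) * (ε * (1 + 2 * b2) * aF) := by
          apply mul_le_mul_of_nonneg_left hD hd0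
        have h2 : (d : ℝ) * (ε * (1 + 2 * b2) * aF) ≤ Cd * ε * aF := by
          rw [hCddef]
          linarith [mul_nonneg hε.le haF.le]
        rw [hεCd] at h2
        linarith
      have hfinal : (c - δ * c / 2) * aF
          ≤ (Module.finrank ℂ (kerAll A (winter S w K)) : ℝ) := by
        linarith [hcast, hVlow, hstep]
      have hlast : (1 - δ) * c * aF ≤ (c - δ * c / 2) * aF := by
        have := mul_nonneg (mul_nonneg hδ.le hcpos.le) haF.le
        linarith
      linarith
  · -- Part (ii)
    intro δ hδ
    set bw : ℝ := ((wball S w).card : ℝ) with hbwdef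
    have hbw : 0 ≤ bw := Nat.cast_nonneg _
    have hden : 0 < (d : ℝ) * bw + 1 := by positivity
    obtain ⟨N1, hN1⟩ := (Metric.tendsto_atTop.mp hc) (δ / 2) (by positivity)
    obtain ⟨N2, hN2⟩ := (Metric.tendsto_atTop.mp hlim) (δ / (2 * ((d : ℝ) * bw + 1)))
      (by positivity)
    refine ⟨max N1 N2, fun n hn => ?_⟩
    have hn1 := hN1 n (le_trans (le_max_left _ _) hn)
    have hn2 := hN2 n (le_trans (le_max_right _ _) hn)
    rw [Real.dist_eq] at hn1 hn2
    set aF : ℝ := ((F n).card : ℝ) with haFdef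
    have haF : 0 < aF := hcardpos n
    set Y := kerOn A (F n) (winter S w (F n)) with hYdef
    haveI fdY : FiniteDimensional ℂ Y := fd_of_supp Y (F n) (fun f hf => hf.1)
    haveI fdV := fd_of_supp (VSpace A (F n)) (F n) (fun f hf => hf.1)
    have himg : (ZSpace S w A (F n)).map (restrictTo d (F n)) ≤ Y := by
      rintro x hx
      obtain ⟨f, hfZ, rfl⟩ := Submodule.mem_map.mp hx
      obtain ⟨hf1, hf2⟩ := (mem_kerOn (A := A)).mp hfZ
      refine mem_kerOn.mpr ⟨?_, ?_⟩
      · intro i x hx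
        have : ((restrictTo d (F n)) f) i = MonoidAlgebra.ofCoeff ((f i).coeff.filter (· ∈ F n)) := rfl
        rw [this, MonoidAlgebra.coeff_ofCoeff, Finsupp.support_filter, Finset.mem_filter] at hx
        exact hx.2
      · intro i p hp
        set r := (restrictTo d (F n)) f with hrdef2
        set gg := f - r with hggdef
        have hgsupp : ∀ j, (gg j).coeff.support ⊆ (wnbhd S w (F n)) \ (F n) := by
          intro j x hx
          rw [Finsupp.mem_support_iff] at hx
          have hval : (gg j).coeff x = (f j).coeff x - (if x ∈ F n then (f j).coeff x else 0) := rfl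
          by_cases hxF : x ∈ F n
          · exfalso; apply hx; rw [hval]; simp [hxF]
          · have hfx : (f j).coeff x ≠ 0 := by
              intro h0; apply hx; rw [hval]; simp [hxF, h0]
            exact Finset.mem_sdiff.mpr ⟨hf1 j (Finsupp.mem_support_iff.mpr hfx), hxF⟩
        have hAg : (A.mulVec gg i).coeff p = 0 := by
          refine mulVec_apply_eq_zero hA hgsupp ?_ i
          intro b hb x hx hbx
          rw [Finset.mem_sdiff] at hx
          apply hx.2
          have hmem : b⁻¹ * p ∈ F n := (mem_winter.mp hp).2 b⁻¹ (myinv_mem_wball hS1 hb)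
          rwa [← hbx, inv_mul_cancel_left] at hmem
        have h1 : r = f - gg := (sub_sub_cancel f r).symm
        have hsub : A.mulVec r = A.mulVec f - A.mulVec gg := by
          rw [h1]; exact map_sub (mulVecL A) f gg
        rw [hsub]
        show ((A.mulVec f - A.mulVec gg) i).coeff p = 0
        rw [Pi.sub_apply, MonoidAlgebra.coeff_sub, Finsupp.sub_apply, hAg, hf2 i p (winter_subset hp), sub_zero]
    have hmono2 : Module.finrank ℂ ((ZSpace S w A (F n)).map (restrictTo d (F n)))
        ≤ Module.finrank ℂ Y := Submodule.finrank_mono himg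
    have hmain2 : ∀ f ∈ Y,
        ((evalOn d (F n \ winter S w (F n))).comp (mulVecL A)) f = 0 →
        f ∈ VSpace A (F n) := by
      intro f hf hφ
      obtain ⟨hf1, hf2⟩ := (mem_kerOn (A := A)).mp hf
      refine mem_kerOn.mpr ⟨hf1, fun i g hg => ?_⟩
      by_cases hgw : g ∈ winter S w (F n)
      · exact hf2 i g hgw
      · have hgD : g ∈ F n \ winter S w (F n) := Finset.mem_sdiff.mpr ⟨hg, hgw⟩
        exact congrFun (congrFun hφ i) ⟨g, hgD⟩
    have hkey := key_dim_ineq Y (VSpace A (F n)) (F n \ winter S w (F n))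
      ((evalOn d _).comp (mulVecL A)) hmain2
    have h8 := card_sdiff_winter_general (S := S) hS1 (Finset.Subset.refl (F n)) w
    have hDb : ((F n \ winter S w (F n)).card : ℝ) ≤ bw * ((wbdry S (F n)).card : ℝ) := by
      have hzero : ((F n \ F n).card : ℝ) = 0 := by simp
      rw [hzero] at h8
      linarith
    have hVup : (Module.finrank ℂ (VSpace A (F n)) : ℝ) ≤ (c + δ / 2) * aF := by
      have h' : (Module.finrank ℂ (VSpace A (F n)) : ℝ) / aF < c + δ / 2 := by
        have := (abs_lt.mp hn1).2
        linarith
      have := (div_lt_iff₀ haF).mp h'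
      linarith
    have hbdry : ((wbdry S (F n)).card : ℝ) ≤ (δ / (2 * ((d : ℝ) * bw + 1))) * aF := by
      have h' : ((wbdry S (F n)).card : ℝ) / aF < δ / (2 * ((d : ℝ) * bw + 1)) := by
        have := (abs_lt.mp (by simpa using hn2)).2
        simpa using this
      have := (div_lt_iff₀ haF).mp h'
      linarith
    have hcast : (Module.finrank ℂ Y : ℝ) ≤ (Module.finrank ℂ (VSpace A (F n)) : ℝ)
        + (d : ℝ) * (((F n \ winter S w (F n)).card : ℝ)) := by
      exact_mod_cast hkey
    have hfrac : ((d : ℝ) * bw) * ((δ / (2 * ((d : ℝ) * bw + 1))) * aF) ≤ (δ / 2) * aF :=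
      frac_aux hbw (Nat.cast_nonneg d) hδ haF
    have hstep : (d : ℝ) * (((F n \ winter S w (F n)).card : ℝ)) ≤ (δ / 2) * aF := by
      have hd0 : (0:ℝ) ≤ (d : ℝ) := Nat.cast_nonneg _
      calc (d : ℝ) * (((F n \ winter S w (F n)).card : ℝ))
          ≤ (d : ℝ) * (bw * ((wbdry S (F n)).card : ℝ)) :=
            mul_le_mul_of_nonneg_left hDb hd0
        _ ≤ ((d : ℝ) * bw) * ((δ / (2 * ((d : ℝ) * bw + 1))) * aF) := by
            rw [mul_assoc]
            apply mul_le_mul_of_nonneg_left _ hd0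
            exact mul_le_mul_of_nonneg_left hbdry hbw
        _ ≤ (δ / 2) * aF := hfrac
    have hcast2 : (Module.finrank ℂ ((ZSpace S w A (F n)).map (restrictTo d (F n))) : ℝ)
        ≤ (Module.finrank ℂ Y : ℝ) := by exact_mod_cast hmono2
    calc (Module.finrank ℂ ((ZSpace S w A (F n)).map (restrictTo d (F n))) : ℝ)
        ≤ (Module.finrank ℂ Y : ℝ) := hcast2
      _ ≤ (c + δ / 2) * aF + (δ / 2) * aF := by linarith
      _ = (c + δ) * aF := by ring
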